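/- The only rational numbers X, Y satisfying 1728·Y² = X³ + 22·X² + 125·X are X = 0 and Y = 0. -/

import Mathlib

/-- kill: both odd in QA, mod 16 -/
lemma kill16 : ∀ A T B : ZMod 16,
    B^2 = (2*A+1)^4+66*(2*A+1)^2*(2*T+1)^2+1125*(2*T+1)^4 → False := by decide

/-- kill: A1a, mod 3 : a² = 9k⁴-33k²l²-l⁴ with 3∤a -/
lemma kill3a : ∀ A K L : ZMod 3, A ≠ 0 → A^2 = 9*K^4-33*K^2*L^2-L^4 → False := by decide

/-- kill: A2, mod 3 : 3a₁² = k⁴-11k²l²-l⁴ with ¬(3|k ∧ 3|l) -/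
lemma kill3b : ∀ A K L : ZMod 3, (K = 0 → L ≠ 0) → 3*A^2 = K^4-11*K^2*L^2-L^4 → False := by decide

/-- kill: classify d=3 : 3γ² = α⁴+22α²T²+125T⁴ resp 25α⁴+22α²T²+5T⁴, 3∤T -/
lemma kill3c : ∀ G A T : ZMod 3, T ≠ 0 → 3*G^2 = A^4+22*A^2*T^2+125*T^4 → False := by decide
lemma kill3d : ∀ G A T : ZMod 3, T ≠ 0 → 3*G^2 = 25*A^4+22*A^2*T^2+5*T^4 → False := by decide
/-- kill: classify d=15 : 3γ² = 5α⁴+22α²T²+25T⁴ resp 125α⁴+22α²T²+T⁴, 3∤T -/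
lemma kill3e : ∀ G A T : ZMod 3, T ≠ 0 → 3*G^2 = 5*A^4+22*A^2*T^2+25*T^4 → False := by decide
lemma kill3f : ∀ G A T : ZMod 3, T ≠ 0 → 3*G^2 = 125*A^4+22*A^2*T^2+T^4 → False := by decide

/-- kill: A1b with k even : a² = k⁴-33k²l²-9l⁴, a odd, k even, l odd, mod 8 -/
lemma kill8 : ∀ A K L : ZMod 8, (2*A+1)^2 = (2*K)^4-33*(2*K)^2*(2*L+1)^2-9*(2*L+1)^4 → False := by
  decide


lemma sq_ne_1125 (b : ℤ) : b^2 ≠ 1125 := by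
  intro h
  have h1 : b ≤ 33 := by nlinarith
  have h2 : -33 ≤ b := by nlinarith
  nlinarith

/-- coprime positive product is a square: extract squares -/
lemma sq_mul_sq {m n t : ℤ} (hco : IsCoprime m n) (hmn : m * n = t^2)
    (hm : 0 < m) (hn : 0 < n) :
    ∃ k l : ℤ, m = k^2 ∧ n = l^2 ∧ (t = k*l ∨ t = -(k*l)) := by
  obtain ⟨k, hk⟩ := Int.sq_of_isCoprime hco hmn
  obtain ⟨l, hl⟩ := Int.sq_of_isCoprime hco.symm (by rw [mul_comm] at hmn; exact hmn)
  have hk2 : m = k^2 := by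
    rcases hk with h | h
    · exact h
    · nlinarith [sq_nonneg k]
  have hl2 : n = l^2 := by
    rcases hl with h | h
    · exact h
    · nlinarith [sq_nonneg l]
  refine ⟨k, l, hk2, hl2, ?_⟩
  have : (t - k*l) * (t + k*l) = 0 := by
    have : m * n = k^2 * l^2 := by rw [hk2, hl2]
    nlinarith [hmn, this]
  rcases mul_eq_zero.mp this with h | h
  · left; linarith
  · right; linarith



lemma sq_dvd_of_pow4 {γ b : ℤ} (h : γ^4 ∣ b^2) : γ^2 ∣ b := by
  have h2 : (γ^2)^2 ∣ b^2 := by rwa [show (γ^2)^2 = γ^4 by ring]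
  exact (Int.pow_dvd_pow_iff (two_ne_zero)).mp h2




lemma not_both_odd {a t b : ℤ} (h : b^2 = a^4+66*a^2*t^2+1125*t^4) :
    ¬(Odd a ∧ Odd t) := by
  rintro ⟨⟨A, hA⟩, ⟨T, hT⟩⟩
  subst hA hT
  have h16 := congrArg (fun n : ℤ => (n : ZMod 16)) h
  push_cast at h16
  exact kill16 A T b h16


lemma coprime_A1 {a t : ℤ} (hco : Int.gcd a t = 1) (hodd : ¬(Odd a ∧ Odd t))
    (h3a : ¬ (3:ℤ) ∣ a) : Int.gcd (a^2+33*t^2) (6*t^2) = 1 := by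
  by_contra hg
  obtain ⟨p, hp, hpg⟩ := Nat.exists_prime_and_dvd hg
  have hpZ : Prime (p:ℤ) := Nat.prime_iff_prime_int.mp hp
  have hps : (p:ℤ) ∣ a^2+33*t^2 :=
    dvd_trans (Int.natCast_dvd_natCast.mpr hpg) (Int.gcd_dvd_left _ _)
  have hp6 : (p:ℤ) ∣ 6*t^2 :=
    dvd_trans (Int.natCast_dvd_natCast.mpr hpg) (Int.gcd_dvd_right _ _)
  have hpa2 : (p:ℤ) ∣ t → False := by
    intro hpt
    have h33 : (p:ℤ) ∣ 33*t^2 := Dvd.dvd.mul_left (Dvd.dvd.pow hpt two_ne_zero) 33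
    have ha2 : (p:ℤ) ∣ a^2 := by
      have h' := dvd_sub hps h33
      rwa [show a^2+33*t^2 - 33*t^2 = a^2 by ring] at h'
    have hpa : (p:ℤ) ∣ a := Int.Prime.dvd_pow' hp ha2
    have h1 := Int.dvd_coe_gcd hpa hpt
    rw [hco] at h1
    have : p ∣ 1 := by exact_mod_cast h1
    exact hp.one_lt.ne' (Nat.dvd_one.mp this)
  have : (p:ℤ) ∣ 2*3 ∨ (p:ℤ) ∣ t := by
    rcases (hpZ.dvd_mul).mp (by rwa [show (6:ℤ)*t^2 = (2*3)*t^2 by ring] at hp6) with h | h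
    · exact Or.inl h
    · exact Or.inr (Int.Prime.dvd_pow' hp h)
  rcases this with h6 | hpt
  · rcases (hpZ.dvd_mul).mp h6 with h2 | h3
    · -- p = 2
      have hp2 : p = 2 := by
        have : p ∣ 2 := by exact_mod_cast h2
        exact (Nat.prime_dvd_prime_iff_eq hp Nat.prime_two).mp this
      subst hp2
      rcases Int.even_or_odd a with ⟨A, hA⟩ | hAodd
      · rcases Int.even_or_odd t with ⟨T, hT⟩ | ⟨T, hT⟩
        · have h1 := Int.dvd_coe_gcd (⟨A, by linarith⟩ : (2:ℤ) ∣ a) (⟨T, by linarith⟩ : (2:ℤ) ∣ t)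
          rw [hco] at h1
          norm_num at h1
        · have heq : a^2+33*t^2 = 2*(2*A^2+66*T^2+66*T+16)+1 := by
            rw [hA, hT]; ring
          rw [heq] at hps
          omega
      · rcases Int.even_or_odd t with ⟨T, hT⟩ | hTodd
        · obtain ⟨A, hA⟩ := hAodd
          have heq : a^2+33*t^2 = 2*(2*A^2+2*A+66*T^2)+1 := by
            rw [hA, hT]; ring
          rw [heq] at hps
          omega
        · exact hodd ⟨hAodd, hTodd⟩
    · -- p = 3
      have hp3 : p = 3 := by
        have : p ∣ 3 := by exact_mod_cast h3
        exact (Nat.prime_dvd_prime_iff_eq hp Nat.prime_three).mp this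
      subst hp3
      apply h3a
      apply Int.Prime.dvd_pow' (k := 2) (by norm_num)
      have h33 : (3:ℤ) ∣ 33*t^2 := ⟨11*t^2, by ring⟩
      have h' := dvd_sub hps h33
      rwa [show a^2+33*t^2 - 33*t^2 = a^2 by ring] at h'
  · exact hpa2 hpt


lemma coprime_A2 {a₁ t : ℤ} (hco : Int.gcd a₁ t = 1) (hodd : ¬(Odd a₁ ∧ Odd t))
    (h3t : ¬ (3:ℤ) ∣ t) : Int.gcd (3*a₁^2+11*t^2) (2*t^2) = 1 := by
  by_contra hg
  obtain ⟨p, hp, hpg⟩ := Nat.exists_prime_and_dvd hg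
  have hpZ : Prime (p:ℤ) := Nat.prime_iff_prime_int.mp hp
  have hps : (p:ℤ) ∣ 3*a₁^2+11*t^2 :=
    dvd_trans (Int.natCast_dvd_natCast.mpr hpg) (Int.gcd_dvd_left _ _)
  have hp2t : (p:ℤ) ∣ 2*t^2 :=
    dvd_trans (Int.natCast_dvd_natCast.mpr hpg) (Int.gcd_dvd_right _ _)
  rcases (hpZ.dvd_mul).mp hp2t with h2 | ht2
  · -- p = 2
    have hp2 : p = 2 := by
      have : p ∣ 2 := by exact_mod_cast h2
      exact (Nat.prime_dvd_prime_iff_eq hp Nat.prime_two).mp this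
    subst hp2
    rcases Int.even_or_odd a₁ with ⟨A, hA⟩ | hAodd
    · rcases Int.even_or_odd t with ⟨T, hT⟩ | ⟨T, hT⟩
      · have h1 := Int.dvd_coe_gcd (⟨A, by linarith⟩ : (2:ℤ) ∣ a₁) (⟨T, by linarith⟩ : (2:ℤ) ∣ t)
        rw [hco] at h1
        norm_num at h1
      · have heq : 3*a₁^2+11*t^2 = 2*(6*A^2+22*T^2+22*T+5)+1 := by rw [hA, hT]; ring
        rw [heq] at hps; omega
    · rcases Int.even_or_odd t with ⟨T, hT⟩ | hTodd
      · obtain ⟨A, hA⟩ := hAodd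
        have heq : 3*a₁^2+11*t^2 = 2*(6*A^2+6*A+22*T^2+1)+1 := by rw [hA, hT]; ring
        rw [heq] at hps; omega
      · exact hodd ⟨hAodd, hTodd⟩
  · have hpt : (p:ℤ) ∣ t := Int.Prime.dvd_pow' hp ht2
    have h11 : (p:ℤ) ∣ 11*t^2 := Dvd.dvd.mul_left (Dvd.dvd.pow hpt two_ne_zero) 11
    have h3a2 : (p:ℤ) ∣ 3*a₁^2 := by
      have h' := dvd_sub hps h11
      rwa [show 3*a₁^2+11*t^2 - 11*t^2 = 3*a₁^2 by ring] at h'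
    rcases (hpZ.dvd_mul).mp h3a2 with h3 | ha2
    · have hp3 : p = 3 := by
        have : p ∣ 3 := by exact_mod_cast h3
        exact (Nat.prime_dvd_prime_iff_eq hp Nat.prime_three).mp this
      subst hp3
      exact h3t hpt
    · have hpa : (p:ℤ) ∣ a₁ := Int.Prime.dvd_pow' hp ha2
      have h1 := Int.dvd_coe_gcd hpa hpt
      rw [hco] at h1
      have : p ∣ 1 := by exact_mod_cast h1
      exact hp.one_lt.ne' (Nat.dvd_one.mp this)



lemma dvd_one_of_dvd_dvd {a t d : ℤ} (hco : Int.gcd a t = 1) (ha : d ∣ a) (ht : d ∣ t) :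
    d ∣ 1 := by
  have h1 := Int.dvd_coe_gcd ha ht
  rw [hco] at h1
  exact_mod_cast h1

lemma gcd_eq_one_of_dvd_dvd {a t a' t' : ℤ} (hco : Int.gcd a t = 1) (ha : a' ∣ a)
    (ht : t' ∣ t) : Int.gcd a' t' = 1 := by
  have h1 : (↑(Int.gcd a' t') : ℤ) ∣ (↑(Int.gcd a t) : ℤ) :=
    Int.dvd_coe_gcd (dvd_trans (Int.gcd_dvd_left _ _) ha) (dvd_trans (Int.gcd_dvd_right _ _) ht)
  rw [hco] at h1
  exact Nat.dvd_one.mp (by exact_mod_cast h1)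

lemma pos_normalize {s m n c : ℤ} (hm : s = m^2-n^2) (hp : c = m*n) (hcpos : 0 < c)
    (hco : Int.gcd m n = 1) (hpar : m % 2 = 0 ∧ n % 2 = 1 ∨ m % 2 = 1 ∧ n % 2 = 0) :
    ∃ m' n', s = m'^2-n'^2 ∧ c = m'*n' ∧ Int.gcd m' n' = 1 ∧ 0 < m' ∧ 0 < n' ∧
      ((Even m' ∧ Odd n') ∨ (Odd m' ∧ Even n')) ∧ m'^2 = m^2 ∧ n'^2 = n^2 := by
  have hpar' : (Even m ∧ Odd n) ∨ (Odd m ∧ Even n) := by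
    rcases hpar with ⟨h1, h2⟩ | ⟨h1, h2⟩
    · exact Or.inl ⟨Int.even_iff.mpr h1, Int.odd_iff.mpr h2⟩
    · exact Or.inr ⟨Int.odd_iff.mpr h1, Int.even_iff.mpr h2⟩
  have hm0 : m ≠ 0 := by rintro rfl; simp at hp; omega
  rcases lt_or_gt_of_ne hm0 with hneg | hpos
  · refine ⟨-m, -n, by rw [hm]; ring, by rw [hp]; ring, by simpa using hco, by omega, ?_, ?_,
      by ring, by ring⟩
    · nlinarith
    · rcases hpar' with ⟨h1, h2⟩ | ⟨h1, h2⟩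
      · exact Or.inl ⟨h1.neg, h2.neg⟩
      · exact Or.inr ⟨h1.neg, h2.neg⟩
  · have hn : 0 < n := by nlinarith
    exact ⟨m, n, hm, hp, hco, hpos, hn, hpar', rfl, rfl⟩

lemma astep_coprime (a t b : ℤ) (ht : t ≠ 0) (hco : Int.gcd a t = 1)
    (h : b^2 = a^4+66*a^2*t^2+1125*t^4) :
    ∃ k v w : ℤ, w^2 = k^4-132*k^2*v^2-144*v^4 ∧ v ≠ 0 ∧ k^8 ≤ b^2 := by
  have hodd := not_both_odd h
  have ha : a ≠ 0 := by
    rintro rfl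
    rw [Int.gcd_zero_left] at hco
    have : t = 1 ∨ t = -1 := Int.natAbs_eq_iff.mp hco |>.imp (by simp) (by simp)
    rcases this with rfl | rfl <;> norm_num at h <;> exact sq_ne_1125 b (by linarith)
  by_cases h3a : (3:ℤ) ∣ a
  · -- branch A2 : dead end
    exfalso
    obtain ⟨a₁, rfl⟩ := h3a
    have hco₁ : Int.gcd a₁ t = 1 := gcd_eq_one_of_dvd_dvd hco (Dvd.intro_left 3 rfl) dvd_rfl
    have h3t : ¬ (3:ℤ) ∣ t := by
      intro h3t
      have := dvd_one_of_dvd_dvd hco ⟨a₁, rfl⟩ h3t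
      norm_num at this
    have hodd₁ : ¬(Odd a₁ ∧ Odd t) := by
      rintro ⟨⟨A, hA⟩, hT⟩
      exact hodd ⟨⟨3*A+1, by rw [hA]; ring⟩, hT⟩
    have h3b : (3:ℤ) ∣ b := by
      apply Int.prime_three.dvd_of_dvd_pow (n := 2)
      exact ⟨27*a₁^4+198*a₁^2*t^2+375*t^4, by linear_combination h⟩
    obtain ⟨b₁, rfl⟩ := h3b
    have hb₁ : b₁^2 = 9*a₁^4+66*a₁^2*t^2+125*t^4 := by
      have h9 : 9*b₁^2 = 9*(9*a₁^4+66*a₁^2*t^2+125*t^4) := by linear_combination h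
      linarith
    have hPT : PythagoreanTriple (3*a₁^2+11*t^2) (2*t^2) b₁ := by
      unfold PythagoreanTriple
      linear_combination -hb₁
    obtain ⟨m, n, hmn1, _, hmnco, hparity⟩ :=
      PythagoreanTriple.coprime_classification.mp ⟨hPT, coprime_A2 hco₁ hodd₁ h3t⟩
    rcases hmn1 with ⟨hm, hn⟩ | ⟨hm, hn⟩
    swap
    · have h2 : (2:ℤ) ∣ ↑(Int.gcd (3*a₁^2+11*t^2) (2*t^2)) :=
        Int.dvd_coe_gcd ⟨m*n, by rw [hm]; ring⟩ ⟨t^2, by ring⟩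
      rw [coprime_A2 hco₁ hodd₁ h3t] at h2
      norm_num at h2
    have ht2 : t^2 = m*n := by linarith
    obtain ⟨m', n', hm', hp', hco', hmpos, hnpos, _, _, _⟩ :=
      pos_normalize hm ht2 (by positivity) hmnco hparity
    obtain ⟨k, l, hk, hl, _⟩ :=
      sq_mul_sq (Int.isCoprime_iff_gcd_eq_one.mpr hco') hp'.symm hmpos hnpos
    have heq : 3*a₁^2 = k^4 - 11*k^2*l^2 - l^4 := by
      have h1 : 3*a₁^2+11*t^2 = (k^2)^2-(l^2)^2 := by rw [hm', hk, hl]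
      have h2 : t^2 = k^2*l^2 := by rw [hp', hk, hl]
      linear_combination h1 - 11*h2
    have hknl : (3:ℤ) ∣ k → ¬ (3:ℤ) ∣ l := by
      intro h3k h3l
      have h3m' : (3:ℤ) ∣ m' := by rw [hk]; exact dvd_pow h3k two_ne_zero
      have h3n' : (3:ℤ) ∣ n' := by rw [hl]; exact dvd_pow h3l two_ne_zero
      have h1 := dvd_one_of_dvd_dvd hco' h3m' h3n'
      norm_num at h1
    have hcast := congrArg (fun x : ℤ => (x : ZMod 3)) heq
    push_cast at hcast
    refine kill3b (a₁ : ZMod 3) (k : ZMod 3) (l : ZMod 3) ?_ hcast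
    intro hk0 hl0
    exact hknl ((ZMod.intCast_zmod_eq_zero_iff_dvd k 3).mp hk0)
      ((ZMod.intCast_zmod_eq_zero_iff_dvd l 3).mp hl0)
  · -- branch A1
    have hPT : PythagoreanTriple (a^2+33*t^2) (6*t^2) b := by
      unfold PythagoreanTriple
      linear_combination -h
    obtain ⟨m, n, hmn1, hzb, hmnco, hparity⟩ :=
      PythagoreanTriple.coprime_classification.mp ⟨hPT, coprime_A1 hco hodd h3a⟩
    have hb2 : b^2 = (m^2+n^2)^2 := by
      rcases hzb with h1 | h1 <;> rw [h1] <;> ring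
    rcases hmn1 with ⟨hm, hn⟩ | ⟨hm, hn⟩
    swap
    · exfalso
      have h2 : (2:ℤ) ∣ ↑(Int.gcd (a^2+33*t^2) (6*t^2)) :=
        Int.dvd_coe_gcd ⟨m*n, by rw [hm]; ring⟩ ⟨3*t^2, by ring⟩
      rw [coprime_A1 hco hodd h3a] at h2
      norm_num at h2
    have ht2 : 3*t^2 = m*n := by linarith
    obtain ⟨m', n', hm', hp', hco', hmpos, hnpos, hpar', hmsq, hnsq⟩ :=
      pos_normalize hm ht2 (by positivity) hmnco hparity
    have hb2' : b^2 = (m'^2+n'^2)^2 := by rw [hmsq, hnsq]; exact hb2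
    have h3mn : (3:ℤ) ∣ m' ∨ (3:ℤ) ∣ n' := by
      have hdvd : (3:ℤ) ∣ m'*n' := ⟨t^2, by linarith [hp']⟩
      exact (Int.prime_three.dvd_mul).mp hdvd
    rcases h3mn with ⟨m₁, hm₁⟩ | ⟨n₁, hn₁⟩
    · -- A1a : dead
      exfalso
      have hm₁pos : 0 < m₁ := by omega
      have hprod : m₁ * n' = t^2 := by
        have h1 : 3*t^2 = 3*(m₁*n') := by rw [hp', hm₁]; ring
        linarith
      have hco₁ : Int.gcd m₁ n' = 1 :=
        gcd_eq_one_of_dvd_dvd hco' ⟨3, by omega⟩ dvd_rfl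
      obtain ⟨k, l, hk, hl, _⟩ :=
        sq_mul_sq (Int.isCoprime_iff_gcd_eq_one.mpr hco₁) hprod hm₁pos hnpos
      have heq : a^2 = 9*k^4 - 33*k^2*l^2 - l^4 := by
        have h1 : a^2+33*t^2 = (3*k^2)^2-(l^2)^2 := by rw [hm', hm₁, hk, hl]
        have h2 : t^2 = k^2*l^2 := by rw [← hprod, hk, hl]
        linear_combination h1 - 33*h2
      have hcast := congrArg (fun x : ℤ => (x : ZMod 3)) heq
      push_cast at hcast
      refine kill3a (a : ZMod 3) (k : ZMod 3) (l : ZMod 3) ?_ hcast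
      intro ha0
      exact h3a ((ZMod.intCast_zmod_eq_zero_iff_dvd a 3).mp ha0)
    · -- A1b
      have hn₁pos : 0 < n₁ := by omega
      have hprod : m' * n₁ = t^2 := by
        have h1 : 3*t^2 = 3*(m'*n₁) := by rw [hp', hn₁]; ring
        linarith
      have hco₁ : Int.gcd m' n₁ = 1 :=
        gcd_eq_one_of_dvd_dvd hco' dvd_rfl ⟨3, by omega⟩
      obtain ⟨k, l, hk, hl, htkl⟩ :=
        sq_mul_sq (Int.isCoprime_iff_gcd_eq_one.mpr hco₁) hprod hmpos hn₁pos
      have heq : a^2 = k^4 - 33*k^2*l^2 - 9*l^4 := by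
        have h1 : a^2+33*t^2 = (k^2)^2-(3*l^2)^2 := by rw [hm', hn₁, hk, hl]
        have h2 : t^2 = k^2*l^2 := by rw [← hprod, hk, hl]
        linear_combination h1 - 33*h2
      have hl0 : l ≠ 0 := by
        rintro rfl
        rcases htkl with h1 | h1 <;> simp at h1 <;> exact ht h1
      rcases hpar' with ⟨hme, hno⟩ | ⟨hmo, hne⟩
      · -- m' even : dead via mod 8
        exfalso
        have hke : Even k := by
          have h1 : Even (k^2) := by rw [← hk]; exact hme
          exact (Int.even_pow.mp h1).1
        have hlo : Odd l := by
          rcases Int.even_or_odd l with he | ho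
          · exfalso
            have h1 : Even n' := by
              rw [hn₁, hl]
              exact ((Int.even_pow (n := 2)).mpr ⟨he, two_ne_zero⟩).mul_left 3
            exact (Int.not_odd_iff_even.mpr h1) hno
          · exact ho
        have hao : Odd a := by
          rcases Int.even_or_odd a with he | ho
          · exfalso
            have hte : Even t := by
              rcases htkl with h1 | h1 <;> rw [h1]
              · exact hke.mul_right l
              · exact (hke.mul_right l).neg
            have := dvd_one_of_dvd_dvd hco he.two_dvd hte.two_dvd
            norm_num at this
          · exact ho
        obtain ⟨A, hA⟩ := hao
        obtain ⟨K, hK⟩ := hke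
        obtain ⟨L, hL⟩ := hlo
        have heq8 : (2*A+1)^2 = (2*K)^4-33*(2*K)^2*(2*L+1)^2-9*(2*L+1)^4 := by
          rw [← hA, ← hL, show (2:ℤ)*K = K + K by ring, ← hK]
          exact heq
        have hcast := congrArg (fun x : ℤ => (x : ZMod 8)) heq8
        push_cast at hcast
        exact kill8 (A : ZMod 8) (K : ZMod 8) (L : ZMod 8) hcast
      · -- n' even : descent output
        have hle : Even l := by
          have h1 : Even (3*l^2) := by rw [← hl, ← hn₁]; exact hne
          rcases Int.even_or_odd l with he | ho
          · exact he
          · exfalso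
            have h2 : Odd (3*l^2) := (by decide : Odd (3:ℤ)).mul (ho.pow (n := 2))
            exact (Int.not_odd_iff_even.mpr h1) h2
        obtain ⟨v, hv⟩ := hle
        refine ⟨k, v, a, ?_, ?_, ?_⟩
        · rw [heq, hv]; ring
        · rintro rfl
          simp at hv
          exact hl0 hv
        · have hk8 : k^8 = m'^4 := by rw [hk]; ring
          rw [hk8, hb2']
          nlinarith [sq_nonneg (m'*n'), sq_nonneg (n'^2)]



set_option maxRecDepth 8000 in
set_option maxHeartbeats 1000000 in
lemma classify (P T r : ℤ) (hP : 0 < P) (hco : Int.gcd P T = 1)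
    (h : P*(P^2+66*P*T^2+1125*T^4) = r^2) :
    (∃ a b : ℤ, P = a^2 ∧ b^2 = a^4+66*a^2*T^2+1125*T^4) ∨
    (∃ a b : ℤ, P = 5*a^2 ∧ b^2 = 5*a^4+66*a^2*T^2+225*T^4) := by
  obtain ⟨N, hNdef⟩ : ∃ N, N = P^2+66*P*T^2+1125*T^4 := ⟨_, rfl⟩
  rw [← hNdef] at h
  have hNpos : 0 < N := by
    have h1 : N = (P+33*T^2)^2 + 36*(T^2)^2 := by rw [hNdef]; ring
    nlinarith [sq_nonneg (P+33*T^2), sq_nonneg (T^2), hP, sq_nonneg T]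
  obtain ⟨g, hgdef⟩ : ∃ g:ℕ, g = Int.gcd P N := ⟨_, rfl⟩
  have hgP : (g:ℤ) ∣ P := by rw [hgdef]; exact (Int.gcd_dvd_left _ _)
  have hgN : (g:ℤ) ∣ N := by rw [hgdef]; exact (Int.gcd_dvd_right _ _)
  have hgcdpos : 0 < Int.gcd P N := Int.gcd_pos_of_ne_zero_left N (ne_of_gt hP)
  have hgpos : (0:ℤ) < (g:ℤ) := by exact_mod_cast hgdef ▸ hgcdpos
  have hgz : (g:ℤ) ≠ 0 := ne_of_gt hgpos
  have hgT : Int.gcd (↑g) T = 1 := gcd_eq_one_of_dvd_dvd hco hgP dvd_rfl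
  have hg1125 : (g:ℤ) ∣ 1125 := by
    have h1 : (g:ℤ) ∣ 1125*T^4 := by
      have h2 : (g:ℤ) ∣ N - P*P - 66*(P*T^2) :=
        dvd_sub (dvd_sub hgN (hgP.mul_right P)) ((hgP.mul_right (T^2)).mul_left 66)
      have h3 : N - P*P - 66*(P*T^2) = 1125*T^4 := by rw [hNdef]; ring
      rwa [h3] at h2
    have hcop : IsCoprime ((g:ℤ)) (T^4) :=
      (Int.isCoprime_iff_gcd_eq_one.mpr hgT).pow_right
    exact hcop.dvd_of_dvd_mul_right h1
  have hgn : g ∣ 1125 := by exact_mod_cast hg1125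
  obtain ⟨P₁, hP₁⟩ := hgP
  obtain ⟨N₁, hN₁⟩ := hgN
  have hco₁ : Int.gcd P₁ N₁ = 1 := by
    have e1 : P / (↑g:ℤ) = P₁ := by rw [hP₁]; exact Int.mul_ediv_cancel_left _ hgz
    have e2 : N / (↑g:ℤ) = N₁ := by rw [hN₁]; exact Int.mul_ediv_cancel_left _ hgz
    have h5 := Int.gcd_div_gcd_div_gcd (i := P) (j := N) hgcdpos
    rw [← hgdef, e1, e2] at h5
    exact h5
  have hgr : (↑g:ℤ) ∣ r := by
    apply (Int.pow_dvd_pow_iff (two_ne_zero)).mp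
    exact ⟨P₁*N₁, by rw [← h, hP₁, hN₁]; ring⟩
  obtain ⟨r₁, hr₁⟩ := hgr
  have hprod : P₁ * N₁ = r₁^2 := by
    rw [hP₁, hN₁, hr₁] at h
    have h1 : (↑g:ℤ)^2 * (P₁*N₁) = (↑g:ℤ)^2 * r₁^2 := by linear_combination h
    exact mul_left_cancel₀ (pow_ne_zero 2 hgz) h1
  have hP₁pos : 0 < P₁ := by
    rcases lt_trichotomy P₁ 0 with h1 | h1 | h1
    · nlinarith [hP₁ ▸ hP]
    · rw [h1, mul_zero] at hP₁; linarith [hP₁ ▸ hP]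
    · exact h1
  have hN₁pos : 0 < N₁ := by
    rcases lt_trichotomy N₁ 0 with h1 | h1 | h1
    · nlinarith [hN₁ ▸ hNpos]
    · rw [h1, mul_zero] at hN₁; linarith [hN₁ ▸ hNpos]
    · exact h1
  obtain ⟨α, hα⟩ := Int.sq_of_isCoprime (Int.isCoprime_iff_gcd_eq_one.mpr hco₁) hprod
  have hαsq : P₁ = α^2 := by rcases hα with h1 | h1; exact h1; nlinarith [sq_nonneg α]
  obtain ⟨β, hβ⟩ := Int.sq_of_isCoprime (Int.isCoprime_iff_gcd_eq_one.mpr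
    ((Int.gcd_comm P₁ N₁) ▸ hco₁)) (by rw [mul_comm]; exact hprod)
  have hβsq : N₁ = β^2 := by rcases hβ with h1 | h1; exact h1; nlinarith [sq_nonneg β]
  rw [hαsq] at hP₁
  rw [hβsq] at hN₁
  -- enumerate divisors
  have hgcases : g = 1 ∨ g = 3 ∨ g = 5 ∨ g = 9 ∨ g = 15 ∨ g = 25 ∨ g = 45 ∨ g = 75 ∨
      g = 125 ∨ g = 225 ∨ g = 375 ∨ g = 1125 := by
    have hmem : g ∈ Nat.divisors 1125 := Nat.mem_divisors.mpr ⟨hgn, by norm_num⟩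
    have hd : Nat.divisors 1125 = {1, 3, 5, 9, 15, 25, 45, 75, 125, 225, 375, 1125} := by decide
    rw [hd] at hmem
    simp only [Finset.mem_insert, Finset.mem_singleton] at hmem
    tauto
  have h3T : (3:ℤ) ∣ P → ¬ (3:ℤ) ∣ T := by
    intro h3P h3t
    have := dvd_one_of_dvd_dvd hco h3P h3t
    norm_num at this
  -- helper for the dead cases
  have killcase : ∀ c₄ c₂ c₀ : ℤ, β^2 = 3*(c₄*α^4+c₂*α^2*T^2+c₀*T^4) →
      (∃ γ : ℤ, 3*γ^2 = c₄*α^4+c₂*α^2*T^2+c₀*T^4) := by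
    intro c₄ c₂ c₀ heq
    have h3β : (3:ℤ) ∣ β := Int.prime_three.dvd_of_dvd_pow (n := 2) ⟨_, heq⟩
    obtain ⟨γ, rfl⟩ := h3β
    exact ⟨γ, by nlinarith [heq]⟩
  rcases hgcases with rfl | rfl | rfl | rfl | rfl | rfl | rfl | rfl | rfl | rfl | rfl | rfl <;>
    push_cast at hP₁ hN₁
  · -- g = 1
    left
    exact ⟨α, β, by linarith, by linear_combination hNdef - (by linarith : N = β^2)
      + (P+α^2+66*T^2)*(by linarith : P = α^2)⟩
  · -- g = 3 : dead
    exfalso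
    have hx : 3*(β^2) = 3*(3*(1*α^4+22*α^2*T^2+125*T^4)) := by
      linear_combination hNdef - hN₁ + (P+3*α^2+66*T^2)*hP₁
    obtain ⟨γ, hγ⟩ := killcase 1 22 125 (by linarith)
    have hT3 := h3T ⟨α^2, by linarith⟩
    have hcast := congrArg (fun x : ℤ => (x : ZMod 3)) hγ
    push_cast at hcast
    rw [one_mul] at hcast
    refine kill3c (γ : ZMod 3) (α : ZMod 3) (T : ZMod 3) ?_ hcast
    intro hT0
    exact hT3 ((ZMod.intCast_zmod_eq_zero_iff_dvd T 3).mp hT0)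
  · -- g = 5
    right
    refine ⟨α, β, by linarith, ?_⟩
    have h5 : 5*β^2 = 5*(5*α^4+66*α^2*T^2+225*T^4) := by
      linear_combination hNdef - hN₁ + (P+5*α^2+66*T^2)*hP₁
    linarith
  · -- g = 9
    left
    refine ⟨3*α, 3*β, by linarith, ?_⟩
    have h9 : (3*β)^2 = ((3*α)^2)^2+66*((3*α)^2)*T^2+1125*T^4 := by
      linear_combination hNdef - hN₁ + (P+9*α^2+66*T^2)*hP₁
    linear_combination h9
  · -- g = 15 : dead
    exfalso
    have hx : 15*(β^2) = 15*(3*(5*α^4+22*α^2*T^2+25*T^4)) := by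
      linear_combination hNdef - hN₁ + (P+15*α^2+66*T^2)*hP₁
    obtain ⟨γ, hγ⟩ := killcase 5 22 25 (by linarith)
    have hT3 := h3T ⟨5*α^2, by linarith⟩
    have hcast := congrArg (fun x : ℤ => (x : ZMod 3)) hγ
    push_cast at hcast
    refine kill3e (γ : ZMod 3) (α : ZMod 3) (T : ZMod 3) ?_ hcast
    intro hT0
    exact hT3 ((ZMod.intCast_zmod_eq_zero_iff_dvd T 3).mp hT0)
  · -- g = 25
    left
    refine ⟨5*α, 5*β, by linarith, ?_⟩
    have h25 : (5*β)^2 = ((5*α)^2)^2+66*((5*α)^2)*T^2+1125*T^4 := by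
      linear_combination hNdef - hN₁ + (P+25*α^2+66*T^2)*hP₁
    linear_combination h25
  · -- g = 45
    right
    refine ⟨3*α, 3*β, by linarith, ?_⟩
    have h45 : 5*(3*β)^2 = 5*(5*(3*α)^4+66*(3*α)^2*T^2+225*T^4) := by
      linear_combination hNdef - hN₁ + (P+45*α^2+66*T^2)*hP₁
    linarith
  · -- g = 75 : dead
    exfalso
    have hx : 75*(β^2) = 75*(3*(25*α^4+22*α^2*T^2+5*T^4)) := by
      linear_combination hNdef - hN₁ + (P+75*α^2+66*T^2)*hP₁
    obtain ⟨γ, hγ⟩ := killcase 25 22 5 (by linarith)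
    have hT3 := h3T ⟨25*α^2, by linarith⟩
    have hcast := congrArg (fun x : ℤ => (x : ZMod 3)) hγ
    push_cast at hcast
    refine kill3d (γ : ZMod 3) (α : ZMod 3) (T : ZMod 3) ?_ hcast
    intro hT0
    exact hT3 ((ZMod.intCast_zmod_eq_zero_iff_dvd T 3).mp hT0)
  · -- g = 125
    right
    refine ⟨5*α, 5*β, by linarith, ?_⟩
    have h125 : 5*(5*β)^2 = 5*(5*(5*α)^4+66*(5*α)^2*T^2+225*T^4) := by
      linear_combination hNdef - hN₁ + (P+125*α^2+66*T^2)*hP₁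
    linarith
  · -- g = 225
    left
    refine ⟨15*α, 15*β, by linarith, ?_⟩
    have h225 : (15*β)^2 = ((15*α)^2)^2+66*((15*α)^2)*T^2+1125*T^4 := by
      linear_combination hNdef - hN₁ + (P+225*α^2+66*T^2)*hP₁
    linear_combination h225
  · -- g = 375 : dead
    exfalso
    have hx : 375*(β^2) = 375*(3*(125*α^4+22*α^2*T^2+1*T^4)) := by
      linear_combination hNdef - hN₁ + (P+375*α^2+66*T^2)*hP₁
    obtain ⟨γ, hγ⟩ := killcase 125 22 1 (by linarith)
    have hT3 := h3T ⟨125*α^2, by linarith⟩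
    have hcast := congrArg (fun x : ℤ => (x : ZMod 3)) hγ
    push_cast at hcast
    rw [one_mul] at hcast
    refine kill3f (γ : ZMod 3) (α : ZMod 3) (T : ZMod 3) ?_ hcast
    intro hT0
    exact hT3 ((ZMod.intCast_zmod_eq_zero_iff_dvd T 3).mp hT0)
  · -- g = 1125
    right
    refine ⟨15*α, 15*β, by linarith, ?_⟩
    have h1125 : 5*(15*β)^2 = 5*(5*(15*α)^4+66*(15*α)^2*T^2+225*T^4) := by
      linear_combination hNdef - hN₁ + (P+1125*α^2+66*T^2)*hP₁
    linarith



lemma normalizePoint (x y : ℚ) (h : y^2 = x^3+66*x^2+1125*x) (hx : x ≠ 0) :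
    ∃ (r T : ℤ), T ≠ 0 ∧ (T:ℤ)^2 = (x.den:ℤ) ∧ Int.gcd x.num T = 1 ∧
      x.num*(x.num^2+66*x.num*T^2+1125*T^4) = r^2 := by
  obtain ⟨P, hP⟩ : ∃ P, P = x.num := ⟨_, rfl⟩
  obtain ⟨q, hq⟩ : ∃ q:ℤ, q = (x.den:ℤ) := ⟨_, rfl⟩
  obtain ⟨c, hc⟩ : ∃ c, c = y.num := ⟨_, rfl⟩
  obtain ⟨s, hs⟩ : ∃ s:ℤ, s = (y.den:ℤ) := ⟨_, rfl⟩
  have hq0 : 0 < q := by rw [hq]; exact_mod_cast x.pos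
  have hs0 : 0 < s := by rw [hs]; exact_mod_cast y.pos
  have hxPq : (x:ℚ) = (P:ℚ)/(q:ℚ) := by rw [hP, hq]; push_cast; exact (Rat.num_div_den x).symm
  have hyCs : (y:ℚ) = (c:ℚ)/(s:ℚ) := by rw [hc, hs]; push_cast; exact (Rat.num_div_den y).symm
  have hcoPq : Int.gcd P q = 1 := by
    rw [hP, hq]
    have := x.reduced
    unfold Int.gcd
    simpa using this
  have hcoCs : Int.gcd c s = 1 := by
    rw [hc, hs]
    have := y.reduced
    unfold Int.gcd
    simpa using this
  have hqQ : (q:ℚ) ≠ 0 := by exact_mod_cast ne_of_gt hq0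
  have hsQ : (s:ℚ) ≠ 0 := by exact_mod_cast ne_of_gt hs0
  -- integer identity
  have key : c^2*q^3 = s^2*(P^3+66*P^2*q+1125*P*q^2) := by
    have h1 := h
    rw [hxPq, hyCs] at h1
    field_simp at h1
    have h2 : c ^ 2 * (q ^ 3 * q ^ 2 * q) =
        ((P ^ 3 * q ^ 2 + 66 * P ^ 2 * q ^ 3) * q + 1125 * P * (q ^ 3 * q ^ 2)) * s ^ 2 := by
      have h1' : c ^ 2 * q ^ 3 = s ^ 2 * P * (P * (P + q * 66) + q ^ 2 * 1125) := by
        exact_mod_cast h1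
      linear_combination q ^ 3 * h1'
    have h3 : q^3*(c^2*q^3) = q^3*(s^2*(P^3+66*P^2*q+1125*P*q^2)) := by linear_combination h2
    exact mul_left_cancel₀ (pow_ne_zero 3 (ne_of_gt hq0)) h3
  -- s² = q³
  have hs2q3 : s^2 = q^3 := by
    have hd1 : s^2 ∣ q^3 := by
      have hdvd : s^2 ∣ c^2*q^3 := ⟨_, key⟩
      have hcop : IsCoprime (s^2) (c^2) :=
        (Int.isCoprime_iff_gcd_eq_one.mpr ((Int.gcd_comm c s) ▸ hcoCs)).pow
      exact hcop.dvd_of_dvd_mul_left hdvd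
    have hd2 : q^3 ∣ s^2 := by
      have hM : P^3+66*P^2*q+1125*P*q^2 = P^3 + q*(66*P^2+1125*P*q) := by ring
      have hcop : IsCoprime (q^3) (P^3+66*P^2*q+1125*P*q^2) := by
        rw [hM]
        exact (((Int.isCoprime_iff_gcd_eq_one.mpr ((Int.gcd_comm P q) ▸ hcoPq)).pow_right
          (n := 3)).add_mul_left_right _).pow_left
      have hdvd : q^3 ∣ s^2*(P^3+66*P^2*q+1125*P*q^2) := ⟨c^2, by linarith [key]⟩
      exact hcop.dvd_of_dvd_mul_right hdvd
    exact Int.dvd_antisymm (sq_nonneg s) (by positivity) hd1 hd2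
  have hqs : q ∣ s := by
    apply (Int.pow_dvd_pow_iff (two_ne_zero)).mp
    exact ⟨q, by rw [hs2q3]; ring⟩
  obtain ⟨T, hT⟩ := hqs
  have hT2 : T^2 = q := by
    have h1 : q^2*T^2 = q^2*q := by linear_combination hs2q3 - (s+q*T)*hT
    exact mul_left_cancel₀ (pow_ne_zero 2 (ne_of_gt hq0)) h1
  have hT0 : T ≠ 0 := by
    rintro rfl
    rw [← hT2] at hq0
    norm_num at hq0
  have hgcdPT : Int.gcd P T = 1 :=
    gcd_eq_one_of_dvd_dvd hcoPq dvd_rfl ⟨T, by rw [← hT2]; ring⟩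
  refine ⟨c, T, hT0, by rw [← hq, ← hT2], by rw [← hP]; exact hgcdPT, ?_⟩
  rw [← hP]
  rw [← hT2] at key hs2q3
  rw [hs2q3] at key
  have hT6 : ((T^2)^3 : ℤ) ≠ 0 := by positivity
  have h3 : (T^2)^3*(c^2) = (T^2)^3*(P*(P^2+66*P*T^2+1125*T^4)) := by linear_combination key
  have h4 := mul_left_cancel₀ hT6 h3
  linarith [h4]



lemma astep (a t b : ℤ) (ht : t ≠ 0) (h : b^2 = a^4+66*a^2*t^2+1125*t^4) :
    ∃ k v w : ℤ, w^2 = k^4-132*k^2*v^2-144*v^4 ∧ v ≠ 0 ∧ k^8 ≤ b^2 := by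
  obtain ⟨g, hgdef⟩ : ∃ g:ℕ, g = Int.gcd a t := ⟨_, rfl⟩
  have hgpos : 0 < (g:ℤ) := by
    rw [hgdef]
    exact_mod_cast Int.gcd_pos_iff.mpr (Or.inr ht)
  have hgz : (g:ℤ) ≠ 0 := ne_of_gt hgpos
  obtain ⟨a₀, ha₀⟩ : (g:ℤ) ∣ a := by rw [hgdef]; exact (Int.gcd_dvd_left _ _)
  obtain ⟨t₀, ht₀⟩ : (g:ℤ) ∣ t := by rw [hgdef]; exact (Int.gcd_dvd_right _ _)
  have hb4 : b^2 = (g:ℤ)^4 * (a₀^4+66*a₀^2*t₀^2+1125*t₀^4) := by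
    rw [ha₀, ht₀] at h
    linear_combination h
  obtain ⟨b₀, hb₀⟩ := sq_dvd_of_pow4 (γ := (g:ℤ)) ⟨_, hb4⟩
  have hb₀2 : b₀^2 = a₀^4+66*a₀^2*t₀^2+1125*t₀^4 := by
    have h1 : (g:ℤ)^4*(b₀^2) = (g:ℤ)^4*(a₀^4+66*a₀^2*t₀^2+1125*t₀^4) := by
      rw [hb₀] at hb4
      linear_combination hb4
    exact mul_left_cancel₀ (pow_ne_zero 4 hgz) h1
  have ht₀0 : t₀ ≠ 0 := by rintro rfl; rw [mul_zero] at ht₀; exact ht ht₀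
  have hco₀ : Int.gcd a₀ t₀ = 1 := by
    have e1 : a / (g:ℤ) = a₀ := by rw [ha₀]; exact Int.mul_ediv_cancel_left _ hgz
    have e2 : t / (g:ℤ) = t₀ := by rw [ht₀]; exact Int.mul_ediv_cancel_left _ hgz
    have h5 := Int.gcd_div_gcd_div_gcd (i := a) (j := t)
      (by rw [← hgdef] at *; exact_mod_cast hgpos)
    rw [← hgdef, e1, e2] at h5
    exact h5
  obtain ⟨k, v, w, hQC, hv, hk8⟩ := astep_coprime a₀ t₀ b₀ ht₀0 hco₀ hb₀2
  refine ⟨k, v, w, hQC, hv, ?_⟩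
  have hg1' : (1:ℤ) ≤ (g:ℤ) := hgpos
  have hg1 : 1 ≤ (g:ℤ)^4 := one_le_pow₀ hg1'
  calc k^8 ≤ b₀^2 := hk8
    _ ≤ (g:ℤ)^4 * b₀^2 := by nlinarith [sq_nonneg b₀, hg1]
    _ = b^2 := by rw [hb4, hb₀2]




lemma point_to_QC (x y : ℚ) (h : y^2 = x^3+66*x^2+1125*x) (hx : 0 < x) :
    ∃ k v w : ℤ, w^2 = k^4-132*k^2*v^2-144*v^4 ∧ v ≠ 0 ∧
      k^8 ≤ 45*x.num^2 + 2970*x.num*(x.den:ℤ) + 50625*(x.den:ℤ)^2 := by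
  obtain ⟨r, T, hT0, hT2, hgcd, heq⟩ := normalizePoint x y h (ne_of_gt hx)
  have hPpos : 0 < x.num := Rat.num_pos.mpr hx
  have hdenpos : (0:ℤ) < (x.den:ℤ) := by exact_mod_cast x.pos
  rcases classify x.num T r hPpos hgcd heq with ⟨a, b, hPa, hb⟩ | ⟨a, b, hPa, hb⟩
  · -- d = 1
    obtain ⟨k, v, w, hQC, hv, hk8⟩ := astep a T b hT0 hb
    refine ⟨k, v, w, hQC, hv, ?_⟩
    have hb2 : b^2 = x.num^2+66*x.num*T^2+1125*T^4 := by
      rw [hPa]; linear_combination hb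
    have hTden : T^2 = (x.den:ℤ) := hT2
    have h1 : x.num*T^2 ≥ 0 := by positivity
    have h2 : x.num^2 ≥ 0 := sq_nonneg _
    have h3 : (T^2)^2 ≥ 0 := sq_nonneg _
    calc k^8 ≤ b^2 := hk8
      _ = x.num^2+66*(x.num*T^2)+1125*(T^2)^2 := by rw [hb2]; ring
      _ ≤ 45*x.num^2 + 2970*(x.num*T^2) + 50625*(T^2)^2 := by linarith
      _ = 45*x.num^2 + 2970*x.num*(x.den:ℤ) + 50625*(x.den:ℤ)^2 := by rw [hTden]; ring
  · -- d = 5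
    have ha0 : a ≠ 0 := by
      rintro rfl
      rw [hPa] at hPpos
      norm_num at hPpos
    have hb' : (15*b)^2 = (15*T)^4+66*(15*T)^2*a^2+1125*a^4 := by linear_combination 225*hb
    obtain ⟨k, v, w, hQC, hv, hk8⟩ := astep (15*T) a (15*b) ha0 hb'
    refine ⟨k, v, w, hQC, hv, ?_⟩
    have hkey : (15*b)^2 = 45*x.num^2 + 2970*x.num*(x.den:ℤ) + 50625*(x.den:ℤ)^2 := by
      rw [hPa, ← hT2]
      linear_combination 225*hb
    calc k^8 ≤ (15*b)^2 := hk8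
      _ = _ := hkey



lemma QCzero {z w : ℤ} (h : w^2 = 0^4-132*0^2*z^2-144*z^4) : z = 0 := by
  have hz4 : z^4 = 0 := by nlinarith [sq_nonneg w, sq_nonneg (z^2)]
  exact pow_eq_zero_iff (by norm_num) |>.mp hz4

lemma QCmain : ∀ (n:ℕ) (u z w : ℤ), u.natAbs ≤ n →
    w^2 = u^4-132*u^2*z^2-144*z^4 → z = 0 := by
  intro n
  induction n with
  | zero =>
    intro u z w hn h
    have hu : u = 0 := by
      have := Int.natAbs_eq_zero.mp (Nat.le_zero.mp hn)
      exact this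
    rw [hu] at h
    exact QCzero h
  | succ n ih =>
    intro u z w hn h
    by_contra hz
    have hu : u ≠ 0 := by
      rintro rfl
      exact hz (QCzero h)
    -- gcd reduction
    obtain ⟨g, hgdef⟩ : ∃ g:ℕ, g = Int.gcd u z := ⟨_, rfl⟩
    have hgpos : 0 < (g:ℤ) := by
      rw [hgdef]
      exact_mod_cast Int.gcd_pos_iff.mpr (Or.inl hu)
    have hgz' : (g:ℤ) ≠ 0 := ne_of_gt hgpos
    by_cases hg1 : g = 1
    case neg =>
      -- reduce by common factor
      obtain ⟨u₀, hu₀⟩ : (g:ℤ) ∣ u := by rw [hgdef]; exact (Int.gcd_dvd_left _ _)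
      obtain ⟨z₀, hz₀⟩ : (g:ℤ) ∣ z := by rw [hgdef]; exact (Int.gcd_dvd_right _ _)
      have hw4 : w^2 = (g:ℤ)^4 * (u₀^4-132*u₀^2*z₀^2-144*z₀^4) := by
        rw [hu₀, hz₀] at h
        linear_combination h
      obtain ⟨w₀, hw₀⟩ := sq_dvd_of_pow4 (γ := (g:ℤ)) ⟨_, hw4⟩
      have hw₀2 : w₀^2 = u₀^4-132*u₀^2*z₀^2-144*z₀^4 := by
        have h1 : (g:ℤ)^4*(w₀^2) = (g:ℤ)^4*(u₀^4-132*u₀^2*z₀^2-144*z₀^4) := by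
          rw [hw₀] at hw4
          linear_combination hw4
        exact mul_left_cancel₀ (pow_ne_zero 4 hgz') h1
      have hg2 : 2 ≤ (g:ℤ) := by
        have : 1 ≤ (g:ℤ) := hgpos
        rcases eq_or_lt_of_le this with h1 | h1
        · exfalso; apply hg1; exact_mod_cast h1.symm
        · exact h1
      have hu₀0 : u₀ ≠ 0 := by rintro rfl; rw [mul_zero] at hu₀; exact hu hu₀
      have hlt : u₀.natAbs < u.natAbs := by
        rw [hu₀, Int.natAbs_mul]
        have h2 : 2 ≤ (g:ℤ).natAbs := by omega
        have h3 : 1 ≤ u₀.natAbs := Int.natAbs_pos.mpr hu₀0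
        nlinarith [h2, h3]
      have hz₀0 := ih u₀ z₀ w₀ (by omega) hw₀2
      rw [hz₀0, mul_zero] at hz₀
      exact hz hz₀
    case pos =>
      subst hg1
      -- coprime case
      have hu2pos : (0:ℤ) < u^2 := by positivity
      have hz2 : (1:ℤ) ≤ z^2 := by
        have : (0:ℤ) < z^2 := by positivity
        omega
      have hz4pos : (0:ℤ) < z^4 := by positivity
      have h132 : 132*z^2 ≤ u^2 := by
        by_contra hlt
        push_neg at hlt
        nlinarith [sq_nonneg w, mul_lt_mul_of_pos_right hlt hu2pos]
      have h144 : (144:ℤ) ≤ u^2 := by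
        have habs : 12 ≤ |u| ∨ |u| ≤ 11 := by omega
        rcases habs with h1 | h1
        · nlinarith [sq_abs u, abs_nonneg u]
        · exfalso
          nlinarith [sq_abs u, abs_nonneg u, h132, hz2]
      -- construct B±
      have h45 : (u^2-66*z^2)^2 - w^2 = 4500*z^4 := by linear_combination -h
      have hpar : (2:ℤ) ∣ (u^2-66*z^2) - w := by
        have h2 : (2:ℤ) ∣ ((u^2-66*z^2)-w)*((u^2-66*z^2)+w) :=
          ⟨2250*z^4, by linear_combination h45⟩
        rcases (Int.prime_two.dvd_mul).mp h2 with h3 | h3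
        · exact h3
        · obtain ⟨c, hc⟩ := h3
          exact ⟨c - w, by linarith⟩
      obtain ⟨D, hD⟩ := hpar
      have hS : u^2 - 66*z^2 = w + 2*D := by linarith
      have hBprod : (w+D)*D = 1125*z^4 := by
        have h4 : 4*((w+D)*D) = 4*(1125*z^4) := by
          rw [hS] at h45
          linear_combination h45
        linarith
      have hsum_pos : 0 < (w+D) + D := by
        have : 0 < u^2 - 66*z^2 := by linarith
        linarith [hS]
      have hprod_pos : 0 < (w+D)*D := by
        rw [hBprod]
        positivity
      have hBp_pos : 0 < w + D := by
        rcases lt_trichotomy (w+D) 0 with h1 | h1 | h1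
        · nlinarith
        · rw [h1, zero_mul] at hprod_pos; exact absurd hprod_pos (lt_irrefl 0)
        · exact h1
      have hBm_pos : 0 < D := by
        rcases lt_trichotomy D 0 with h1 | h1 | h1
        · nlinarith
        · rw [h1, mul_zero] at hprod_pos; exact absurd hprod_pos (lt_irrefl 0)
        · exact h1
      -- the new rational point
      have hz2Z : ((z^2:ℤ):ℚ) ≠ 0 := by
        have : (z:ℚ) ≠ 0 := by exact_mod_cast hz
        push_cast
        positivity
      have hz3Z : ((z^3:ℤ):ℚ) ≠ 0 := by
        have : (z:ℚ) ≠ 0 := by exact_mod_cast hz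
        push_cast
        intro hcon
        apply this
        exact pow_eq_zero_iff (by norm_num) |>.mp hcon
      obtain ⟨xq, hxq⟩ : ∃ xq : ℚ, xq = ((w+D : ℤ):ℚ)/((z^2:ℤ):ℚ) := ⟨_, rfl⟩
      obtain ⟨yq, hyq⟩ : ∃ yq : ℚ, yq = (((w+D)*u : ℤ):ℚ)/((z^3:ℤ):ℚ) := ⟨_, rfl⟩
      have hkey : (w+D)*u^2 = (w+D)^2+66*(w+D)*z^2+1125*z^4 := by
        have hSsum : u^2 = (w+D) + D + 66*z^2 := by linarith
        linear_combination (w+D)*hSsum + hBprod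
      have hcurve : yq^2 = xq^3+66*xq^2+1125*xq := by
        rw [hxq, hyq]
        have hz2 : ((z:ℚ))^2 ≠ 0 := by
          intro hcon
          have : (z:ℚ) ≠ 0 := by exact_mod_cast hz
          exact this (pow_eq_zero_iff (by norm_num) |>.mp hcon)
        have hkeyQ : ((w:ℚ)+D)*(u:ℚ)^2 = ((w:ℚ)+D)^2+66*((w:ℚ)+D)*(z:ℚ)^2+1125*(z:ℚ)^4 := by
          exact_mod_cast hkey
        push_cast
        field_simp
        linear_combination ((w:ℚ)+(D:ℚ))*hkeyQ
      -- extract num/den data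
      have hxq_pos : 0 < xq := by
        rw [hxq]
        apply div_pos
        · exact_mod_cast hBp_pos
        · exact_mod_cast (by positivity : (0:ℤ) < z^2)
      have hdiv : xq = Rat.divInt (w+D) (z^2) := by
        rw [hxq, Rat.divInt_eq_div]
      have hz2ne : (z^2 : ℤ) ≠ 0 := by positivity
      have hnum_dvd : xq.num ∣ (w+D) := by rw [hdiv]; exact Rat.num_dvd _ hz2ne
      have hden_dvd : ((xq.den:ℤ)) ∣ z^2 := by rw [hdiv]; exact Rat.den_dvd _ _
      have hnum_pos : 0 < xq.num := Rat.num_pos.mpr hxq_pos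
      have hden_pos : (0:ℤ) < (xq.den:ℤ) := by exact_mod_cast xq.pos
      have hnum_le : xq.num ≤ w+D := Int.le_of_dvd hBp_pos hnum_dvd
      have hden_le : ((xq.den:ℤ)) ≤ z^2 := Int.le_of_dvd (by positivity) hden_dvd
      have hBp_lt : w+D < u^2 := by linarith
      have hnum_le_u2 : xq.num ≤ u^2 := by linarith
      obtain ⟨k, v, w', hQC', hv, hk8⟩ := point_to_QC xq yq hcurve hxq_pos
      -- bound k
      have hN2 : xq.num^2 ≤ u^2*u^2 := by
        calc xq.num^2 = xq.num*xq.num := by ring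
          _ ≤ u^2*u^2 := mul_le_mul hnum_le_u2 hnum_le_u2 (le_of_lt hnum_pos) (sq_nonneg u)
      have hNE : xq.num*((xq.den:ℤ)) ≤ u^2*z^2 :=
        mul_le_mul hnum_le_u2 hden_le (le_of_lt hden_pos) (sq_nonneg u)
      have hE2 : ((xq.den:ℤ))^2 ≤ (z^2)*(z^2) := by
        calc ((xq.den:ℤ))^2 = (xq.den:ℤ)*(xq.den:ℤ) := by ring
          _ ≤ (z^2)*(z^2) := mul_le_mul hden_le hden_le (le_of_lt hden_pos) (sq_nonneg z)
      have hA : 132*(u^2*z^2) ≤ u^2*u^2 := by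
        calc 132*(u^2*z^2) = u^2*(132*z^2) := by ring
          _ ≤ u^2*u^2 := mul_le_mul_of_nonneg_left h132 (sq_nonneg u)
      have hZ : 17424*((z^2)*(z^2)) ≤ u^2*u^2 := by
        calc 17424*((z^2)*(z^2)) = (132*z^2)*(132*z^2) := by ring
          _ ≤ u^2*u^2 := mul_le_mul h132 h132 (by positivity) (sq_nonneg u)
      have hU4 : (20736:ℤ) ≤ u^2*u^2 := by
        calc (20736:ℤ) = 144*144 := by norm_num
          _ ≤ u^2*u^2 := mul_le_mul h144 h144 (by norm_num) (sq_nonneg u)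
      have hU8 : 20736*(u^2*u^2) ≤ u^8 := by
        calc 20736*(u^2*u^2) ≤ (u^2*u^2)*(u^2*u^2) :=
              mul_le_mul_of_nonneg_right hU4 (by positivity)
          _ = u^8 := by ring
      have hk8lt : k^8 < u^8 := by linarith [hk8, hN2, hNE, hE2, hA, hZ, hU8, hU4]
      have hklt : k.natAbs < u.natAbs := by
        have e1 : ((k.natAbs:ℤ))^8 = k^8 := by
          rw [← Int.abs_eq_natAbs, ← abs_pow, abs_of_nonneg (by positivity : (0:ℤ) ≤ k^8)]
        have e2 : ((u.natAbs:ℤ))^8 = u^8 := by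
          rw [← Int.abs_eq_natAbs, ← abs_pow, abs_of_nonneg (by positivity : (0:ℤ) ≤ u^8)]
        have h3 : ((k.natAbs:ℤ))^8 < ((u.natAbs:ℤ))^8 := by rw [e1, e2]; exact hk8lt
        have h4 : k.natAbs^8 < u.natAbs^8 := by exact_mod_cast h3
        exact (Nat.pow_lt_pow_iff_left (by norm_num)).mp h4
      exact hv (ih k v w' (by omega) hQC')



theorem rational_points_rank_zero_curve (X Y : ℚ)
    (h : 1728 * Y ^ 2 = X ^ 3 + 22 * X ^ 2 + 125 * X) :
    X = 0 ∧ Y = 0 := by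
  obtain ⟨x, hxdef⟩ : ∃ x : ℚ, x = 3*X := ⟨_, rfl⟩
  obtain ⟨y, hydef⟩ : ∃ y : ℚ, y = 216*Y := ⟨_, rfl⟩
  have hy : y^2 = x^3+66*x^2+1125*x := by
    rw [hxdef, hydef]
    linear_combination 27*h
  have hX : X = 0 := by
    by_contra hX0
    have hx0 : x ≠ 0 := by
      rw [hxdef]
      intro hcon
      apply hX0
      linarith [hcon]
    have hy0 : y ≠ 0 := by
      intro hcon
      rw [hcon] at hy
      have h1 : x*((x+33)^2+36) = 0 := by linear_combination -hy
      rcases mul_eq_zero.mp h1 with h2 | h2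
      · exact hx0 h2
      · nlinarith [sq_nonneg (x+33)]
    have hxpos : 0 < x := by
      rcases lt_trichotomy x 0 with h1 | h1 | h1
      · exfalso
        have h2 : 0 < y^2 := by positivity
        nlinarith [sq_nonneg (x+33)]
      · exact absurd h1 hx0
      · exact h1
    obtain ⟨k, v, w, hQC, hv, -⟩ := point_to_QC x y hy hxpos
    exact hv (QCmain k.natAbs k v w (le_refl _) hQC)
  refine ⟨hX, ?_⟩
  rw [hX] at h
  have hY2 : Y^2 = 0 := by linarith
  exact pow_eq_zero_iff two_ne_zero |>.mp hY2
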